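/- For all integers n, m, and k with k ≥ 0, the q-Chu–Vandermonde identity ∑_{j=0}^{k} q^{(k-j)(n-j)} · qbinom(n,j) · qbinom(m,k-j) = qbinom(n+m,k) holds for the generalized q-binomial coefficients (valid including negative n and m). -/

import Mathlib

open LaurentPolynomial in
/-- The ordinary Gaussian binomial coefficient as a (Laurent) polynomial in `q = T 1`,
defined by the `q`-Pascal rule; it is `0` when the lower entry exceeds the upper one. -/
noncomputable def gauss : ℕ → ℕ → LaurentPolynomial ℤ
  | _, 0 => 1
  | 0, _ + 1 => 0
  | a + 1, b + 1 => gauss a b + T ((b : ℤ) + 1) * gauss a (b + 1)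

open LaurentPolynomial in
/-- The generalized `q`-binomial coefficient, a Laurent polynomial in `q = T 1`,
extended to arbitrary integer entries. -/
noncomputable def qbinom (n k : ℤ) : LaurentPolynomial ℤ :=
  if 0 ≤ k ∧ k ≤ n then gauss n.toNat k.toNat
  else if n < 0 ∧ 0 ≤ k then
    (-1) ^ k.toNat * T (k * (2 * n - k + 1) / 2) * gauss (k - n - 1).toNat k.toNat
  else if k ≤ n ∧ n < 0 then
    (-1) ^ (n - k).toNat * T ((n * (n + 1) - k * (k + 1)) / 2) *
      gauss (-k - 1).toNat (-n - 1).toNat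
  else 0

section Aux
open LaurentPolynomial

@[simp] lemma gauss_zero (a : ℕ) : gauss a 0 = 1 := by cases a <;> rfl
lemma gauss_succ (a b : ℕ) : gauss (a+1) (b+1) = gauss a b + T ((b : ℤ) + 1) * gauss a (b + 1) := rfl
lemma gauss_of_lt : ∀ a b : ℕ, a < b → gauss a b = 0 := by
  intro a
  induction a with
  | zero => intro b hb; match b, hb with | b+1, _ => rfl
  | succ a ih =>
    intro b hb
    match b, hb with
    | b+1, hb => rw [gauss_succ, ih b (by omega), ih (b+1) (by omega)]; ring
lemma gauss_diag : ∀ a : ℕ, gauss a a = 1 := by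
  intro a
  induction a with
  | zero => rfl
  | succ a ih => rw [gauss_succ, ih, gauss_of_lt a (a+1) (by omega)]; ring
lemma Tmul (x y : ℤ) : (T x : LaurentPolynomial ℤ) * T y = T (x + y) := (T_add x y).symm
lemma gauss_ratio : ∀ a b : ℕ, (T ((b:ℤ)+1) - 1) * gauss a (b+1) = (T ((a:ℤ) - b) - 1) * gauss a b := by
  intro a
  induction a with
  | zero =>
    intro b
    cases b with
    | zero => simp [gauss]
    | succ c => rw [gauss_of_lt 0 (c+2) (by omega), gauss_of_lt 0 (c+1) (by omega)]; ring
  | succ a ih =>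
    intro b
    cases b with
    | zero =>
      have h1 := ih 0
      have hA0 : (T (1:ℤ) : LaurentPolynomial ℤ) * T (a:ℤ) = T ((a:ℤ)+1) := by
        rw [Tmul]; ring_nf
      rw [gauss_succ]
      push_cast at h1 ⊢
      simp only [gauss_zero, Nat.cast_zero, sub_zero] at h1 ⊢
      ring_nf at h1 ⊢
      linear_combination (norm := ring_nf) T (1:ℤ) * h1 + hA0
    | succ c =>
      have h1 := ih (c+1)
      have h2 := ih c
      have hA : (T ((c:ℤ)+1+1) : LaurentPolynomial ℤ) * T ((a:ℤ)-c-1) = T ((a:ℤ)+1) := by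
        rw [Tmul]; ring_nf
      have hB : (T ((c:ℤ)+1) : LaurentPolynomial ℤ) * T ((a:ℤ)-c) = T ((a:ℤ)+1) := by
        rw [Tmul]; ring_nf
      rw [show c+1+1 = (c+1)+1 from rfl, gauss_succ a (c+1), gauss_succ a c]
      push_cast at h1 h2 ⊢
      linear_combination (norm := ring_nf) T ((c:ℤ)+1+1) * h1 + h2 + gauss a (c+1) * hA - gauss a (c+1) * hB

lemma qbinom_of_nonneg {n k : ℤ} (hn : 0 ≤ n) (hk : 0 ≤ k) :
    qbinom n k = gauss n.toNat k.toNat := by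
  unfold qbinom
  rcases le_or_gt k n with h | h
  · rw [if_pos ⟨hk, h⟩]
  · rw [if_neg (by omega), if_neg (by omega), if_neg (by omega),
      gauss_of_lt n.toNat k.toNat (by omega)]

lemma qbinom_of_neg {n k : ℤ} (hn : n < 0) (hk : 0 ≤ k) :
    qbinom n k = (-1) ^ k.toNat * T (k * (2 * n - k + 1) / 2) * gauss (k - n - 1).toNat k.toNat := by
  unfold qbinom
  rw [if_neg (by omega), if_pos ⟨hn, hk⟩]

lemma qbinom_zero (n : ℤ) : qbinom n 0 = 1 := by
  rcases le_or_gt 0 n with h | h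
  · rw [qbinom_of_nonneg h le_rfl]; simp
  · rw [qbinom_of_neg h le_rfl]; norm_num

lemma qbinom_pascal (n k : ℤ) (hk : 1 ≤ k) :
    qbinom n k = qbinom (n-1) (k-1) + T k * qbinom (n-1) k := by
  rcases lt_trichotomy n 0 with hn | hn | hn
  · -- n ≤ -1
    obtain ⟨t, ht⟩ := Int.even_mul_succ_self (k-1)
    have hc0 : k * (2*n - k + 1) = 2 * (n*k - t) := by linear_combination -ht
    have hc1 : (k-1) * (2*(n-1) - (k-1) + 1) = 2 * (n*k - t - n) := by linear_combination -ht
    have hc2 : k * (2*(n-1) - k + 1) = 2 * (n*k - t - k) := by linear_combination -ht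
    set c0 : ℤ := n*k - t with hc0def
    obtain ⟨B, hB⟩ : ∃ B : ℕ, k.toNat = B + 1 := ⟨k.toNat - 1, by omega⟩
    have hB1 : (k-1).toNat = B := by omega
    have hBc : (B : ℤ) = k - 1 := by omega
    obtain ⟨A, hA⟩ : ∃ A : ℕ, (k - n - 1).toNat = A := ⟨_, rfl⟩
    have hAc : (A : ℤ) = k - n - 1 := by omega
    have hA2 : (k - (n-1) - 1).toNat = A + 1 := by omega
    have hA1 : ((k-1) - (n-1) - 1).toNat = A := by omega
    rw [qbinom_of_neg hn (by omega), qbinom_of_neg (by omega : n - 1 < 0) (by omega : (0:ℤ) ≤ k - 1),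
      qbinom_of_neg (by omega : n - 1 < 0) (by omega : (0:ℤ) ≤ k),
      hc0, hc1, hc2, Int.mul_ediv_cancel_left _ two_ne_zero, Int.mul_ediv_cancel_left _ two_ne_zero,
      Int.mul_ediv_cancel_left _ two_ne_zero, hB, hB1, hA, hA2, hA1, gauss_succ]
    have hr := gauss_ratio A B
    have h3 : (T k : LaurentPolynomial ℤ) * T (-k) = 1 := by rw [Tmul]; simp
    rw [show ((A:ℤ) - B) = -n from by omega] at hr
    rw [show ((B:ℤ)+1) = k from by omega] at hr ⊢
    rw [show c0 - n = c0 + -n from by ring, show c0 - k = c0 + -k from by ring, ← Tmul, ← Tmul]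
    linear_combination (norm := ring_nf)
      ((-1)^B * T c0) * hr + ((-1)^B * T c0 * (gauss A B + T k * gauss A (B+1))) * h3
  · -- n = 0
    subst hn
    obtain ⟨t, ht⟩ := Int.even_mul_succ_self (k-1)
    have hc1 : (k-1) * (2*(-1:ℤ) - (k-1) + 1) = 2 * (-t) := by linear_combination -ht
    have hc2 : k * (2*(-1:ℤ) - k + 1) = 2 * (-t - k) := by linear_combination -ht
    obtain ⟨B, hB⟩ : ∃ B : ℕ, k.toNat = B + 1 := ⟨k.toNat - 1, by omega⟩
    have hB1 : (k-1).toNat = B := by omega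
    rw [qbinom_of_nonneg le_rfl (by omega), qbinom_of_neg (by omega : (0:ℤ) - 1 < 0) (by omega : (0:ℤ) ≤ k - 1),
      qbinom_of_neg (by omega : (0:ℤ) - 1 < 0) (by omega : (0:ℤ) ≤ k)]
    rw [show (0:ℤ) - 1 = -1 from by ring, hc1, hc2,
      Int.mul_ediv_cancel_left _ two_ne_zero, Int.mul_ediv_cancel_left _ two_ne_zero,
      show ((0:ℤ)).toNat = 0 from rfl, hB, hB1,
      show (k - 1 - -1 - 1).toNat = B from by omega, show (k - -1 - 1).toNat = B + 1 from by omega,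
      gauss_of_lt 0 (B+1) (by omega), gauss_diag, gauss_diag]
    have h : (T k : LaurentPolynomial ℤ) * T (-t - k) = T (-t) := by rw [Tmul]; ring_nf
    linear_combination (norm := ring_nf) ((-1 : LaurentPolynomial ℤ))^B * h
  · -- n ≥ 1
    obtain ⟨a, ha⟩ : ∃ a : ℕ, n.toNat = a + 1 := ⟨n.toNat - 1, by omega⟩
    obtain ⟨b, hb⟩ : ∃ b : ℕ, k.toNat = b + 1 := ⟨k.toNat - 1, by omega⟩
    rw [qbinom_of_nonneg (by omega) (by omega : (0:ℤ) ≤ k),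
      qbinom_of_nonneg (by omega : (0:ℤ) ≤ n - 1) (by omega : (0:ℤ) ≤ k - 1),
      qbinom_of_nonneg (by omega : (0:ℤ) ≤ n - 1) (by omega : (0:ℤ) ≤ k),
      show (n-1).toNat = a from by omega, show (k-1).toNat = b from by omega, ha, hb, gauss_succ]
    congr 1
    rw [show (T k : LaurentPolynomial ℤ) = T ((b:ℤ)+1) from by rw [show ((b:ℤ)+1) = k from by omega]]

noncomputable def S (n m : ℤ) (k : ℕ) : LaurentPolynomial ℤ :=
  ∑ j ∈ Finset.range (k+1), T (((k:ℤ) - j) * (n - j)) * qbinom n j * qbinom m ((k:ℤ) - j)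

lemma S_rec (c : ℕ) (n m : ℤ) :
    S n m (c+1) = S (n-1) m c + T ((c:ℤ)+1) * S (n-1) m (c+1) := by
  unfold S
  rw [Finset.sum_range_succ' _ (c+1), Finset.sum_range_succ' _ (c+1), mul_add, Finset.mul_sum,
    ← add_assoc, ← Finset.sum_add_distrib]
  congr 1
  · apply Finset.sum_congr rfl
    intro j hj
    have hp := qbinom_pascal n ((j:ℤ)+1) (by omega)
    rw [show ((j:ℤ)+1) - 1 = (j:ℤ) from by ring] at hp
    push_cast
    rw [hp]
    have h2 : (T (((c:ℤ)+1-((j:ℤ)+1)) * (n - 1 - ((j:ℤ)+1))) : LaurentPolynomial ℤ) * T ((c:ℤ)+1)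
        = T (((c:ℤ)+1-((j:ℤ)+1)) * (n-((j:ℤ)+1))) * T ((j:ℤ)+1) := by
      rw [Tmul, Tmul]; congr 1; ring
    linear_combination (norm := ring_nf)
      (-(qbinom (n-1) ((j:ℤ)+1) * qbinom m ((c:ℤ)+1-((j:ℤ)+1)))) * h2
  · push_cast
    rw [qbinom_zero, qbinom_zero]
    rw [show ((c:ℤ) + 1 - 0) * (n - 0) = ((c:ℤ)+1) + (((c:ℤ)+1-0) * (n-1-0)) from by ring, ← Tmul]
    ring

lemma S_eq : ∀ (k : ℕ) (n m : ℤ), S n m k = qbinom (n+m) k := by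
  intro k
  induction k with
  | zero =>
    intro n m
    unfold S
    rw [Finset.sum_range_one]
    norm_num [qbinom_zero]
  | succ c ih =>
    intro n m
    induction n using Int.induction_on with
    | zero =>
      unfold S
      rw [Finset.sum_eq_single 0]
      · norm_num [qbinom_zero]
      · intro j hj hj0
        rw [qbinom_of_nonneg le_rfl (by positivity),
          show (0:ℤ).toNat = 0 from rfl, gauss_of_lt 0 ((j:ℤ)).toNat (by omega)]
        ring
      · intro h; exact absurd (Finset.mem_range.mpr (by omega)) h
    | succ i ihn =>
      push_cast at ihn ⊢
      have hr := S_rec c ((i:ℤ)+1) m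
      rw [show ((i:ℤ)+1) - 1 = (i:ℤ) from by ring, ihn, ih (i:ℤ) m] at hr
      have hp := qbinom_pascal ((i:ℤ)+1+m) ((c:ℤ)+1) (by omega)
      rw [show ((c:ℤ)+1) - 1 = (c:ℤ) from by ring,
        show ((i:ℤ)+1+m) - 1 = (i:ℤ)+m from by ring] at hp
      rw [hr, ← hp]
    | pred i ihn =>
      push_cast at ihn ⊢
      have hr := S_rec c (-(i:ℤ)) m
      rw [show (-(i:ℤ)) - 1 = -(i:ℤ)-1 from by ring, ihn, ih (-(i:ℤ)-1) m] at hr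
      have hp := qbinom_pascal (-(i:ℤ)+m) ((c:ℤ)+1) (by omega)
      rw [show ((c:ℤ)+1) - 1 = (c:ℤ) from by ring,
        show (-(i:ℤ)+m) - 1 = -(i:ℤ)-1+m from by ring] at hp
      rw [hp] at hr
      have hcan := add_left_cancel hr
      have h3 : (T (-(c:ℤ)-1) : LaurentPolynomial ℤ) * T ((c:ℤ)+1) = 1 := by rw [Tmul]; ring_nf; exact T_zero
      linear_combination (norm := ring_nf) (-T (-(c:ℤ)-1)) * hcan
        - (S (-(i:ℤ)-1) m (c+1) - qbinom (-(i:ℤ)-1+m) ((c:ℤ)+1)) * h3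

end Aux

open LaurentPolynomial in
theorem qbinom_chu_vandermonde (n m k : ℤ) (hk : 0 ≤ k) :
    ∑ j ∈ Finset.range (k.toNat + 1),
        T ((k - j) * (n - j)) * qbinom n j * qbinom m (k - j) =
      qbinom (n + m) k := by
  have := S_eq k.toNat n m
  unfold S at this
  rw [show ((k.toNat : ℤ)) = k from by omega] at this
  exact this
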